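/- For d ≥ 1, the set δ_P = {R ∈ ℝ^d : R_i < 0 for all i and Σ_i R_i < −1} (the strip of regularity of the call-on-min payoff transform) is a nonempty open convex cone-truncation; moreover for every R ∈ δ_P the dampened call-on-min payoff x ↦ e^{⟨R,x⟩} max(min(e^{x_1},…,e^{x_d}) − K, 0), with K > 0, is integrable on ℝ^d. -/

import Mathlib

open MeasureTheory

/-- The strip of regularity of the call-on-min payoff transform is nonempty, open
and convex, and for every `R` in it the dampened call-on-min payoff is integrable. -/
theorem call_on_min_strip (d : ℕ) (hd : 0 < d) (K : ℝ) (hK : 0 < K) :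
    ({R : Fin d → ℝ | (∀ i, R i < 0) ∧ ∑ i, R i < -1}).Nonempty ∧
      IsOpen {R : Fin d → ℝ | (∀ i, R i < 0) ∧ ∑ i, R i < -1} ∧
      Convex ℝ {R : Fin d → ℝ | (∀ i, R i < 0) ∧ ∑ i, R i < -1} ∧
      ∀ R : Fin d → ℝ, ((∀ i, R i < 0) ∧ ∑ i, R i < -1) →
        Integrable (fun x : Fin d → ℝ =>
          Real.exp (∑ j, R j * x j) * max ((⨅ j, Real.exp (x j)) - K) 0) := by
  have hset : {R : Fin d → ℝ | (∀ i, R i < 0) ∧ ∑ i, R i < -1} =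
      (⋂ i, {R : Fin d → ℝ | R i < 0}) ∩ {R : Fin d → ℝ | ∑ i, R i < -1} := by
    ext R; simp [Set.mem_iInter]
  refine ⟨⟨fun _ => -2, fun i => by norm_num, ?_⟩, ?_, ?_, ?_⟩
  · simp only [Finset.sum_const, Finset.card_univ, Fintype.card_fin, nsmul_eq_mul]
    have : (1:ℝ) ≤ d := by exact_mod_cast hd
    nlinarith
  · rw [hset]
    exact (isOpen_iInter_of_finite fun i =>
      isOpen_lt (continuous_apply i) continuous_const).inter
      (isOpen_lt (by fun_prop) continuous_const)
  · rw [hset]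
    refine (convex_iInter fun i => convex_halfSpace_lt ⟨fun a b => rfl, fun c a => rfl⟩ 0).inter
      (convex_halfSpace_lt ⟨fun a b => Finset.sum_add_distrib, fun c a => by
        simp [Finset.mul_sum]⟩ (-1))
  · rintro R ⟨hR, hRs⟩
    set S : ℝ := -∑ i, R i with hSdef
    have hS : 1 < S := by simp [hSdef]; linarith
    have hS0 : 0 < S := lt_trans one_pos hS
    set c : Fin d → ℝ := fun j => R j * (1 - 1 / S) with hc
    have hcneg : ∀ j, 0 < -(c j) := by
      intro j
      have h1 : 0 < 1 - 1 / S := by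
        have : 1 / S < 1 := (div_lt_one hS0).2 hS
        linarith
      have := mul_pos (neg_pos.2 (hR j)) h1
      simpa [hc, neg_mul] using this
    set g : ℝ → ℝ → ℝ := fun cj t => Set.indicator (Set.Ioi (Real.log K)) (fun t => Real.exp (cj * t)) t with hg
    have hgint : ∀ j, Integrable (g (c j)) := by
      intro j
      rw [hg]
      rw [integrable_indicator_iff measurableSet_Ioi]
      have := exp_neg_integrableOn_Ioi (Real.log K) (hcneg j)
      simpa [neg_mul, mul_comm] using this
    have hdom : Integrable (fun x : Fin d → ℝ => ∏ j, g (c j) (x j)) :=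
      Integrable.fintype_prod fun j => hgint j
    refine hdom.mono' ?_ ?_
    · apply Measurable.aestronglyMeasurable
      apply Measurable.mul (by fun_prop)
      apply Measurable.max _ measurable_const
      apply Measurable.sub _ measurable_const
      exact Measurable.iInf fun j => (Real.measurable_exp).comp (measurable_pi_apply j)
    · filter_upwards with x
      rcases le_or_gt (⨅ j, Real.exp (x j)) K with hm | hm
      · have : max ((⨅ j, Real.exp (x j)) - K) 0 = 0 := max_eq_right (by linarith)
        rw [this, mul_zero, norm_zero]
        exact Finset.prod_nonneg fun j _ => Set.indicator_nonneg (fun t _ => (Real.exp_pos _).le) _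
      · -- all coordinates > log K
        have hmem : ∀ j, x j ∈ Set.Ioi (Real.log K) := by
          intro j
          have h1 : K < Real.exp (x j) :=
            lt_of_lt_of_le hm (ciInf_le (Set.finite_range _).bddBelow j)
          exact (Real.log_lt_iff_lt_exp hK).mpr h1
        have hgx : ∀ j, g (c j) (x j) = Real.exp (c j * x j) := fun j =>
          Set.indicator_of_mem (hmem j) _
        have hprod : (∏ j, g (c j) (x j)) = Real.exp (∑ j, c j * x j) := by
          rw [Real.exp_sum]; exact Finset.prod_congr rfl fun j _ => hgx j
        rw [hprod]
        have hm0 : 0 < (⨅ j, Real.exp (x j)) := lt_trans hK hm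
        have hmax : max ((⨅ j, Real.exp (x j)) - K) 0 = (⨅ j, Real.exp (x j)) - K :=
          max_eq_left (by linarith)
        rw [Real.norm_eq_abs, abs_of_nonneg (by positivity), hmax]
        -- key: m - K ≤ m ≤ exp(∑ θ j * x j) with θ j = -R j / S
        have hlogm : Real.log (⨅ j, Real.exp (x j)) ≤ ∑ j, (-R j / S) * x j := by
          have hθ : ∑ j, (-R j / S) = 1 := by
            rw [← Finset.sum_div]
            field_simp [hSdef]
            rw [Finset.sum_neg_distrib]
          calc Real.log (⨅ j, Real.exp (x j))
              = ∑ j, (-R j / S) * Real.log (⨅ j, Real.exp (x j)) := by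
                rw [← Finset.sum_mul, hθ, one_mul]
            _ ≤ ∑ j, (-R j / S) * x j := by
                apply Finset.sum_le_sum
                intro j _
                apply mul_le_mul_of_nonneg_left _ (div_nonneg (neg_pos.2 (hR j)).le hS0.le)
                calc Real.log (⨅ j, Real.exp (x j)) ≤ Real.log (Real.exp (x j)) :=
                      Real.log_le_log hm0 (ciInf_le (Set.finite_range _).bddBelow j)
                  _ = x j := Real.log_exp _
        have hmle : (⨅ j, Real.exp (x j)) ≤ Real.exp (∑ j, (-R j / S) * x j) := by
          calc (⨅ j, Real.exp (x j)) = Real.exp (Real.log (⨅ j, Real.exp (x j))) :=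
                (Real.exp_log hm0).symm
            _ ≤ _ := Real.exp_le_exp.2 hlogm
        calc Real.exp (∑ j, R j * x j) * ((⨅ j, Real.exp (x j)) - K)
            ≤ Real.exp (∑ j, R j * x j) * Real.exp (∑ j, (-R j / S) * x j) := by
              apply mul_le_mul_of_nonneg_left _ (Real.exp_pos _).le
              linarith
          _ = Real.exp (∑ j, c j * x j) := by
              rw [← Real.exp_add, ← Finset.sum_add_distrib]
              congr 1
              apply Finset.sum_congr rfl
              intro j _
              rw [hc]
              ring
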